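/- Let f(x) = ‖Ax - b‖₂² with spark(A) > K (any K columns of A are linearly independent). Then for any c ∈ R, the intersection of the sublevel set {x : f(x) ≤ c} with the set of K-sparse vectors is bounded. -/

import Mathlib

noncomputable section

/-- A vector is `K`-sparse if it has at most `K` nonzero entries. -/
def sparse {N : ℕ} (K : ℕ) (x : EuclideanSpace ℝ (Fin N)) : Prop :=
  (Finset.univ.filter fun i => x i ≠ 0).card ≤ K

/-- `IsHT K z x` means `x` is a result of hard thresholding `z`: a `K`-sparse vector
closest to `z` (ties broken arbitrarily). -/
def IsHT {N : ℕ} (K : ℕ) (z x : EuclideanSpace ℝ (Fin N)) : Prop :=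
  sparse K x ∧ ∀ v : EuclideanSpace ℝ (Fin N), sparse K v → ‖x - z‖ ≤ ‖v - z‖

/-- Submodule of vectors supported in `S`. -/
def suppSub {N : ℕ} (S : Finset (Fin N)) : Submodule ℝ (EuclideanSpace ℝ (Fin N)) where
  carrier := {x | ∀ i, i ∉ S → x i = 0}
  add_mem' hx hy i hi := by simp [PiLp.add_apply, hx i hi, hy i hi]
  zero_mem' i _ := rfl
  smul_mem' c x hx i hi := by simp [PiLp.smul_apply, hx i hi]

open Matrix in
lemma bounded_piece {M N : ℕ} (A : Matrix (Fin M) (Fin N) ℝ) (b : EuclideanSpace ℝ (Fin M))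
    (c : ℝ) (S : Finset (Fin N))
    (hli : LinearIndependent ℝ (fun j : S => Aᵀ (j : Fin N))) :
    Bornology.IsBounded
      {x : EuclideanSpace ℝ (Fin N) |
        (∀ i, i ∉ S → x i = 0) ∧ ‖Matrix.toEuclideanLin A x - b‖ ^ 2 ≤ c} := by
  set φ : suppSub S →ₗ[ℝ] EuclideanSpace ℝ (Fin M) :=
    (Matrix.toEuclideanLin A).comp (suppSub S).subtype with hφ
  have hker : LinearMap.ker φ = ⊥ := by
    rw [LinearMap.ker_eq_bot']
    rintro ⟨x, hx⟩ h0
    have h0' : Matrix.toEuclideanLin A x = 0 := h0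
    have key : ∑ j : S, x (j : Fin N) • Aᵀ (j : Fin N) = 0 := by
      funext i
      have h0i : ∑ j, A i j * x j = 0 := by
        have := congrFun (congrArg (WithLp.equiv 2 (Fin M → ℝ)) h0') i
        simpa [Matrix.mulVec, dotProduct] using this
      have e1 : (∑ j : S, x (j : Fin N) • Aᵀ (j : Fin N)) i
          = ∑ j ∈ S, x j * A i j := by
        rw [Finset.sum_apply, Finset.univ_eq_attach]
        rw [← Finset.sum_attach S (fun j => x j * A i j)]
        simp [Matrix.transpose_apply]
      have e2 : ∑ j ∈ S, x j * A i j = ∑ j, x j * A i j := by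
        apply Finset.sum_subset (Finset.subset_univ S)
        intro j _ hj
        simp [hx j hj]
      rw [e1, e2]
      simp only [Pi.zero_apply]
      rw [← h0i]
      exact Finset.sum_congr rfl fun j _ => mul_comm _ _
    have hz := Fintype.linearIndependent_iff.mp hli (fun j : S => x (j : Fin N)) key
    apply Subtype.ext
    refine PiLp.ext fun i => ?_
    by_cases hi : i ∈ S
    · exact hz ⟨i, hi⟩
    · exact hx i hi
  obtain ⟨Kc, Kpos, hanti⟩ := φ.exists_antilipschitzWith hker
  rw [Metric.isBounded_iff_subset_closedBall 0]
  refine ⟨Kc * (max c 1 + ‖b‖), fun x hx => ?_⟩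
  obtain ⟨hxs, hxc⟩ := hx
  have hx' : x ∈ suppSub S := hxs
  have h1 : ‖Matrix.toEuclideanLin A x - b‖ ≤ max c 1 := by
    nlinarith [norm_nonneg (Matrix.toEuclideanLin A x - b), le_max_left c 1, le_max_right c 1,
      sq_nonneg (‖Matrix.toEuclideanLin A x - b‖ - 1)]
  have h2 : ‖Matrix.toEuclideanLin A x‖ ≤ max c 1 + ‖b‖ := by
    calc ‖Matrix.toEuclideanLin A x‖ = ‖(Matrix.toEuclideanLin A x - b) + b‖ := by congr 1; abel
      _ ≤ ‖Matrix.toEuclideanLin A x - b‖ + ‖b‖ := norm_add_le _ _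
      _ ≤ max c 1 + ‖b‖ := by linarith
  have h3 : ‖(⟨x, hx'⟩ : suppSub S)‖ ≤ Kc * ‖φ ⟨x, hx'⟩‖ := by
    have := hanti.le_mul_dist (⟨x, hx'⟩ : suppSub S) 0
    simpa [dist_eq_norm, map_zero] using this
  simp only [Metric.mem_closedBall, dist_zero_right]
  have hnx : ‖x‖ = ‖(⟨x, hx'⟩ : suppSub S)‖ := rfl
  have hφx : φ ⟨x, hx'⟩ = Matrix.toEuclideanLin A x := rfl
  rw [hnx]
  calc ‖(⟨x, hx'⟩ : suppSub S)‖ ≤ Kc * ‖φ ⟨x, hx'⟩‖ := h3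
    _ ≤ Kc * (max c 1 + ‖b‖) := by
        rw [hφx]; exact mul_le_mul_of_nonneg_left h2 Kpos.le

open Matrix in
/-- If `spark(A) > K` (any `K` columns of `A` are linearly independent), then for any `c`,
the intersection of the sublevel set `{x : ‖Ax - b‖² ≤ c}` with the `K`-sparse vectors
is bounded. -/
theorem stmt9 {M N : ℕ} (A : Matrix (Fin M) (Fin N) ℝ) (b : EuclideanSpace ℝ (Fin M))
    (K : ℕ)
    (hspark : ∀ S : Finset (Fin N), S.card ≤ K →
      LinearIndependent ℝ (fun j : S => Aᵀ (j : Fin N))) :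
    ∀ c : ℝ, Bornology.IsBounded
      {x : EuclideanSpace ℝ (Fin N) |
        ‖Matrix.toEuclideanLin A x - b‖ ^ 2 ≤ c ∧ sparse K x} := by
  intro c
  have hsub : {x : EuclideanSpace ℝ (Fin N) |
        ‖Matrix.toEuclideanLin A x - b‖ ^ 2 ≤ c ∧ sparse K x} ⊆
      ⋃ S ∈ {S : Finset (Fin N) | S.card ≤ K},
        {x : EuclideanSpace ℝ (Fin N) |
          (∀ i, i ∉ S → x i = 0) ∧ ‖Matrix.toEuclideanLin A x - b‖ ^ 2 ≤ c} := by
    rintro x ⟨hxc, hxs⟩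
    have hmem : (Finset.univ.filter fun i => x i ≠ 0) ∈
        {S : Finset (Fin N) | S.card ≤ K} := hxs
    refine Set.mem_biUnion hmem ⟨fun i hi => ?_, hxc⟩
    by_contra h
    exact hi (Finset.mem_filter.mpr ⟨Finset.mem_univ i, h⟩)
  refine (Bornology.isBounded_biUnion (Set.toFinite _)).mpr ?_ |>.subset hsub
  intro S hS
  exact bounded_piece A b c S (hspark S hS)
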